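/- Let K be an operator on H_L ⊗ H_R with operator Schmidt rank M (i.e., K = Σ_{j=1}^M X_j ⊗ Y_j), and let ρ = Σ_{i=1}^D p_i ρ_L^i ⊗ ρ_R^i be a separable state with Tr(KρK†) > 0. Then there exist density matrices τ_L, τ_R such that KρK† / Tr(KρK†) ⪯ (DM)² (τ_L ⊗ τ_R). -/

import Mathlib

open Matrix ComplexOrder Kronecker

section AGSPAux

variable {n m : Type*} [Fintype n] [Fintype m] [DecidableEq n] [DecidableEq m]
set_option linter.unusedSectionVars false

private lemma psd_smul' {A : Matrix n n ℂ} (hA : A.PosSemidef) {c : ℝ} (hc : 0 ≤ c) :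
    ((c:ℂ) • A).PosSemidef := by
  refine Matrix.PosSemidef.of_dotProduct_mulVec_nonneg ?_ ?_
  · unfold Matrix.IsHermitian
    rw [conjTranspose_smul, hA.1]
    congr 1
    simp
  · intro x
    rw [smul_mulVec, dotProduct_smul, smul_eq_mul]
    exact mul_nonneg (by exact_mod_cast hc) (hA.dotProduct_mulVec_nonneg x)

private lemma psd_sum' {ι : Type*} (s : Finset ι) (f : ι → Matrix n n ℂ)
    (h : ∀ i ∈ s, (f i).PosSemidef) : (∑ i ∈ s, f i).PosSemidef := by
  classical
  induction s using Finset.induction_on with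
  | empty => simpa using Matrix.PosSemidef.zero
  | insert _ _ hi ih =>
    rw [Finset.sum_insert hi]
    exact Matrix.PosSemidef.add (h _ (Finset.mem_insert_self _ _))
      (ih fun i hi' => h i (Finset.mem_insert_of_mem hi'))

open scoped MatrixOrder in
private lemma psd_sqrt_ex' {A : Matrix n n ℂ} (hA : A.PosSemidef) :
    ∃ B : Matrix n n ℂ, B.PosSemidef ∧ B * B = A :=
  ⟨CFC.sqrt A, (CFC.sqrt_nonneg A).posSemidef, CFC.sqrt_mul_sqrt_self A hA.nonneg⟩

private noncomputable def Matrix.PosSemidef.sqrt {A : Matrix n n ℂ} (hA : A.PosSemidef) :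
    Matrix n n ℂ :=
  Classical.choose (psd_sqrt_ex' hA)

private lemma Matrix.PosSemidef.posSemidef_sqrt {A : Matrix n n ℂ} (hA : A.PosSemidef) :
    hA.sqrt.PosSemidef :=
  (Classical.choose_spec (psd_sqrt_ex' hA)).1

private lemma Matrix.PosSemidef.sqrt_mul_self {A : Matrix n n ℂ} (hA : A.PosSemidef) :
    hA.sqrt * hA.sqrt = A :=
  (Classical.choose_spec (psd_sqrt_ex' hA)).2

private lemma kron_conjTranspose' (A : Matrix n n ℂ) (B : Matrix m m ℂ) :
    (A ⊗ₖ B)ᴴ = Aᴴ ⊗ₖ Bᴴ := by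
  ext ⟨i₁, i₂⟩ ⟨j₁, j₂⟩
  simp [conjTranspose_apply, kroneckerMap_apply]

private lemma kron_psd' {A : Matrix n n ℂ} {B : Matrix m m ℂ}
    (hA : A.PosSemidef) (hB : B.PosSemidef) : (A ⊗ₖ B).PosSemidef := by
  have hsA := hA.posSemidef_sqrt
  have hsB := hB.posSemidef_sqrt
  have : A ⊗ₖ B = (hA.sqrt ⊗ₖ hB.sqrt)ᴴ * (hA.sqrt ⊗ₖ hB.sqrt) := by
    rw [kron_conjTranspose', hsA.1, hsB.1, ← mul_kronecker_mul, hA.sqrt_mul_self,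
      hB.sqrt_mul_self]
  rw [this]
  exact posSemidef_conjTranspose_mul_self _

private lemma sum_kron' {ι : Type*} (s : Finset ι) (f : ι → Matrix n n ℂ) (B : Matrix m m ℂ) :
    (∑ i ∈ s, f i) ⊗ₖ B = ∑ i ∈ s, (f i ⊗ₖ B) := by
  ext ⟨i₁, i₂⟩ ⟨j₁, j₂⟩
  simp [kroneckerMap_apply, Matrix.sum_apply, Finset.sum_mul]

private lemma kron_sum' {ι : Type*} (s : Finset ι) (A : Matrix n n ℂ) (f : ι → Matrix m m ℂ) :
    A ⊗ₖ (∑ i ∈ s, f i) = ∑ i ∈ s, (A ⊗ₖ f i) := by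
  ext ⟨i₁, i₂⟩ ⟨j₁, j₂⟩
  simp [kroneckerMap_apply, Matrix.sum_apply, Finset.mul_sum]

private lemma cs_bound' {M : ℕ} (C : Fin M → Matrix n n ℂ) :
    ((M:ℂ) • (∑ k, C k * (C k)ᴴ) - (∑ k, C k) * (∑ k, C k)ᴴ).PosSemidef := by
  set S := ∑ k, C k with hS
  set T := (M:ℂ) • (∑ k, C k * (C k)ᴴ) - S * Sᴴ with hT
  have hpsd : (∑ k : Fin M, ∑ k' : Fin M, (C k - C k') * (C k - C k')ᴴ).PosSemidef := by
    apply psd_sum'; intro k _; apply psd_sum'; intro k' _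
    exact posSemidef_self_mul_conjTranspose _
  have key : ∑ k : Fin M, ∑ k' : Fin M, (C k - C k') * (C k - C k')ᴴ = T + T := by
    have e1 : ∀ k k' : Fin M, (C k - C k') * (C k - C k')ᴴ
        = C k * (C k)ᴴ - C k * (C k')ᴴ - C k' * (C k)ᴴ + C k' * (C k')ᴴ := by
      intro k k'; rw [conjTranspose_sub]; noncomm_ring
    simp only [e1, Finset.sum_add_distrib, Finset.sum_sub_distrib, Finset.sum_const,
      Finset.card_univ, Fintype.card_fin, ← Finset.mul_sum, ← Finset.sum_mul,
      ← conjTranspose_sum, ← hS]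
    rw [hT, ← Finset.smul_sum, Nat.cast_smul_eq_nsmul ℂ M (∑ k, C k * (C k)ᴴ)]
    abel
  refine Matrix.PosSemidef.of_dotProduct_mulVec_nonneg ?_ ?_
  · unfold Matrix.IsHermitian
    rw [hT, conjTranspose_sub, conjTranspose_smul, conjTranspose_mul, conjTranspose_conjTranspose]
    congr 1
    · congr 1
      · simp
      · rw [conjTranspose_sum]
        congr 1; ext k : 1
        rw [conjTranspose_mul, conjTranspose_conjTranspose]
  · intro x
    have h2 := hpsd.dotProduct_mulVec_nonneg x
    rw [key] at h2
    rw [add_mulVec, dotProduct_add] at h2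
    rw [Complex.le_def] at h2 ⊢
    simp only [Complex.add_re, Complex.add_im, Complex.zero_re, Complex.zero_im] at h2 ⊢
    constructor
    · linarith [h2.1]
    · linarith [h2.2]

private lemma prod_bound' {ι : Type*} [Fintype ι] [DecidableEq ι]
    (S : ι → Matrix n n ℂ) (T : ι → Matrix m m ℂ)
    (hS : ∀ i, (S i).PosSemidef) (hT : ∀ i, (T i).PosSemidef) :
    ((∑ i, S i) ⊗ₖ (∑ i, T i) - ∑ i, (S i ⊗ₖ T i)).PosSemidef := by
  have expand : (∑ i, S i) ⊗ₖ (∑ i, T i) = ∑ p : ι × ι, S p.1 ⊗ₖ T p.2 := by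
    rw [sum_kron']
    simp only [kron_sum']
    rw [← Finset.univ_product_univ, Finset.sum_product]
  have diag : ∑ p ∈ Finset.univ.filter (fun p : ι × ι => p.1 = p.2), S p.1 ⊗ₖ T p.2
      = ∑ i, S i ⊗ₖ T i := by
    rw [Finset.sum_filter, ← Finset.univ_product_univ, Finset.sum_product]
    simp
  have split := Finset.sum_filter_add_sum_filter_not Finset.univ
    (fun p : ι × ι => p.1 = p.2) (fun p => S p.1 ⊗ₖ T p.2)
  have : (∑ i, S i) ⊗ₖ (∑ i, T i) - ∑ i, (S i ⊗ₖ T i)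
      = ∑ p ∈ Finset.univ.filter (fun p : ι × ι => ¬ p.1 = p.2), S p.1 ⊗ₖ T p.2 := by
    rw [expand, ← diag, ← split]; abel
  rw [this]
  exact psd_sum' _ _ (fun p _ => kron_psd' (hS p.1) (hT p.2))

private lemma orthogonalize' {M : ℕ} {l r : Type*} [Fintype l] [Fintype r]
    [DecidableEq l] [DecidableEq r]
    (x : Fin M → Matrix l l ℂ) (y : Fin M → Matrix r r ℂ) :
    ∃ (a : Fin M → Matrix l l ℂ) (b : Fin M → Matrix r r ℂ),
      (∑ j, x j ⊗ₖ y j) = ∑ k, a k ⊗ₖ b k ∧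
      ∀ k k', k ≠ k' → ((b k)ᴴ * (b k')).trace = 0 := by
  set H : Matrix (Fin M) (Fin M) ℂ := Matrix.of (fun j j' => ((y j)ᴴ * (y j')).trace) with hHdef
  have hH : H.IsHermitian := by
    unfold Matrix.IsHermitian
    ext j j'
    simp only [conjTranspose_apply, hHdef, Matrix.of_apply]
    rw [← Matrix.trace_conjTranspose, conjTranspose_mul, conjTranspose_conjTranspose]
  set U : Matrix (Fin M) (Fin M) ℂ := (hH.eigenvectorUnitary : Matrix (Fin M) (Fin M) ℂ) with hUdef
  have hUU : U * star U = 1 := (Matrix.mem_unitaryGroup_iff).mp hH.eigenvectorUnitary.2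
  have diag : star U * H * U = Matrix.diagonal (RCLike.ofReal ∘ hH.eigenvalues) :=
    by have := hH.conjStarAlgAut_star_eigenvectorUnitary
       rwa [Unitary.conjStarAlgAut_star_apply] at this
  refine ⟨fun k => ∑ j, (star (U j k)) • x j, fun k => ∑ j, (U j k) • y j, ?_, ?_⟩
  · have e1 : ∀ k : Fin M, (∑ j, (star (U j k)) • x j) ⊗ₖ (∑ j', (U j' k) • y j')
        = ∑ j, ∑ j', (star (U j k) * U j' k) • (x j ⊗ₖ y j') := by
      intro k
      rw [sum_kron']
      congr 1; ext j : 1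
      rw [kron_sum']
      congr 1; ext j' : 1
      rw [smul_kronecker, kronecker_smul, smul_smul]
    rw [Finset.sum_congr rfl (fun k _ => e1 k), Finset.sum_comm]
    symm
    refine Finset.sum_congr rfl (fun j _ => ?_)
    rw [Finset.sum_comm]
    have e3 : ∀ j' : Fin M, ∑ k, (star (U j k) * U j' k) • (x j ⊗ₖ y j')
        = ((U * star U) j' j) • (x j ⊗ₖ y j') := by
      intro j'
      rw [← Finset.sum_smul]
      congr 1
      rw [Matrix.mul_apply]
      refine Finset.sum_congr rfl (fun k _ => ?_)
      simp [Matrix.star_apply, mul_comm]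
    rw [Finset.sum_congr rfl (fun j' _ => e3 j'), hUU]
    rw [Finset.sum_eq_single j]
    · simp
    · intro j' _ hj'
      simp [Matrix.one_apply, hj']
    · simp
  · intro k k' hkk'
    have e2 : (∑ j, (U j k) • y j)ᴴ * (∑ j', (U j' k') • y j')
        = ∑ j, ∑ j', (star (U j k) * U j' k') • ((y j)ᴴ * (y j')) := by
      rw [conjTranspose_sum, Finset.sum_mul]
      congr 1; ext j : 1
      rw [conjTranspose_smul, Finset.mul_sum]
      congr 1; ext j' : 1
      rw [smul_mul_assoc, mul_smul_comm, smul_smul]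
    rw [e2]
    have : (∑ j, ∑ j', (star (U j k) * U j' k') • ((y j)ᴴ * (y j'))).trace
        = (star U * H * U) k k' := by
      rw [Matrix.trace_sum, mul_assoc, Matrix.mul_apply]
      refine Finset.sum_congr rfl (fun j _ => ?_)
      rw [Matrix.trace_sum, Matrix.mul_apply, Finset.mul_sum]
      refine Finset.sum_congr rfl (fun j' _ => ?_)
      rw [Matrix.trace_smul]
      simp only [hHdef, Matrix.of_apply, Matrix.star_apply, smul_eq_mul]
      ring
    rw [this, diag, Matrix.diagonal_apply_ne _ hkk']

private noncomputable def nuu (A : Matrix n m ℂ) : ℝ := ∑ u, ∑ v, Complex.normSq (A u v)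

private lemma nuu_nonneg (A : Matrix n m ℂ) : 0 ≤ nuu A := by
  apply Finset.sum_nonneg; intro u _
  apply Finset.sum_nonneg; intro v _
  exact Complex.normSq_nonneg _

private lemma nuu_eq_zero {A : Matrix n m ℂ} (h : nuu A = 0) : A = 0 := by
  ext u v
  have h1 : ∀ u ∈ (Finset.univ : Finset n), 0 ≤ ∑ v, Complex.normSq (A u v) := by
    intro u _; exact Finset.sum_nonneg fun v _ => Complex.normSq_nonneg _
  have h2 := (Finset.sum_eq_zero_iff_of_nonneg h1).mp h u (Finset.mem_univ u)
  have h3 := (Finset.sum_eq_zero_iff_of_nonneg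
    (fun v _ => Complex.normSq_nonneg (A u v))).mp h2 v (Finset.mem_univ v)
  simpa using Complex.normSq_eq_zero.mp h3

private lemma trace_mul_ct (A : Matrix n m ℂ) : (A * Aᴴ).trace = ((nuu A : ℝ) : ℂ) := by
  rw [Matrix.trace]
  unfold nuu
  push_cast
  refine Finset.sum_congr rfl (fun u _ => ?_)
  rw [Matrix.diag_apply, Matrix.mul_apply]
  refine Finset.sum_congr rfl (fun v _ => ?_)
  rw [conjTranspose_apply]
  simp [Complex.star_def, Complex.mul_conj]

private lemma psd_diag_nonneg {A : Matrix n n ℂ} (hA : A.PosSemidef) (i : n) : 0 ≤ A i i := by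
  have h := hA.dotProduct_mulVec_nonneg (Pi.single i 1)
  have e : dotProduct (star (Pi.single i 1)) (A *ᵥ Pi.single i 1) = A i i := by
    simp [dotProduct, Matrix.mulVec, Pi.single_apply, apply_ite,
      Finset.sum_ite_eq, Finset.sum_ite_eq', mul_ite, ite_mul]
  rwa [e] at h

private lemma psd_trace_re_nonneg {A : Matrix n n ℂ} (hA : A.PosSemidef) : 0 ≤ A.trace.re := by
  rw [Matrix.trace, Complex.re_sum]
  apply Finset.sum_nonneg
  intro i _
  have := psd_diag_nonneg hA i
  rw [Complex.le_def] at this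
  simpa using this.1

private lemma bal1 {pp aa bb : ℝ} (ha : 0 ≤ aa) :
    Real.sqrt pp * Real.sqrt bb / Real.sqrt aa * aa
      = Real.sqrt pp * (Real.sqrt aa * Real.sqrt bb) := by
  rcases eq_or_lt_of_le ha with h | h
  · rw [← h]; simp
  · rw [div_mul_eq_mul_div, mul_div_assoc, Real.div_sqrt]; ring

private lemma bal3 {pp aa bb : ℝ} (hpp : 0 ≤ pp) (ha : 0 < aa) (hb : 0 < bb) :
    (Real.sqrt pp * Real.sqrt bb / Real.sqrt aa) * (Real.sqrt pp * Real.sqrt aa / Real.sqrt bb)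
      = pp := by
  have h1 : Real.sqrt aa ≠ 0 := ne_of_gt (Real.sqrt_pos.mpr ha)
  have h2 : Real.sqrt bb ≠ 0 := ne_of_gt (Real.sqrt_pos.mpr hb)
  rw [div_mul_div_comm]
  rw [show Real.sqrt pp * Real.sqrt bb * (Real.sqrt pp * Real.sqrt aa)
      = (Real.sqrt pp * Real.sqrt pp) * (Real.sqrt aa * Real.sqrt bb) by ring]
  rw [Real.mul_self_sqrt hpp, mul_div_assoc, div_self (mul_ne_zero h1 h2), mul_one]

private lemma real_smul_eq (t : ℝ) (A : Matrix n m ℂ) : t • A = (t : ℂ) • A := by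
  ext i j
  simp [Matrix.smul_apply, Complex.real_smul]

end AGSPAux

/-- if `K` has operator Schmidt rank (at most) `M`, i.e.
`K = Σ_{j=1}^M X_j ⊗ Y_j`, and `ρ = Σ_{i=1}^D p_i ρ_L^i ⊗ ρ_R^i` is a separable
state with `Tr(KρKᴴ) > 0`, then `KρKᴴ/Tr(KρKᴴ) ⪯ (DM)² (τ_L ⊗ τ_R)` for some
states `τ_L, τ_R`. -/
theorem AGSP_bootstrap {l r : Type*} [Fintype l] [DecidableEq l]
    [Fintype r] [DecidableEq r]
    (D M : ℕ) (hD : 0 < D) (hM : 0 < M)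
    (p : Fin D → ℝ) (hp : ∀ i, 0 ≤ p i) (hp1 : ∑ i, p i = 1)
    (ρL : Fin D → Matrix l l ℂ) (ρR : Fin D → Matrix r r ℂ)
    (hρL : ∀ i, (ρL i).PosSemidef) (hρLt : ∀ i, (ρL i).trace = 1)
    (hρR : ∀ i, (ρR i).PosSemidef) (hρRt : ∀ i, (ρR i).trace = 1)
    (X : Fin M → Matrix l l ℂ) (Y : Fin M → Matrix r r ℂ)
    (K : Matrix (l × r) (l × r) ℂ) (hK : K = ∑ j, X j ⊗ₖ Y j)
    (ρ : Matrix (l × r) (l × r) ℂ) (hρ : ρ = ∑ i, p i • (ρL i ⊗ₖ ρR i))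
    (htr : 0 < (K * ρ * Kᴴ).trace.re) :
    ∃ τL : Matrix l l ℂ, ∃ τR : Matrix r r ℂ,
      τL.PosSemidef ∧ τL.trace = 1 ∧ τR.PosSemidef ∧ τR.trace = 1 ∧
      ((((D : ℝ) * M) ^ 2) • (τL ⊗ₖ τR) -
        ((K * ρ * Kᴴ).trace.re)⁻¹ • (K * ρ * Kᴴ)).PosSemidef := by
  classical
  set Q := K * ρ * Kᴴ with hQdef
  set sL : Fin D → Matrix l l ℂ := fun i => (hρL i).sqrt with hsL
  set sR : Fin D → Matrix r r ℂ := fun i => (hρR i).sqrt with hsR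
  set W : Fin D → Matrix (l × r) (l × r) ℂ := fun i => K * (sL i ⊗ₖ sR i) with hWdef
  have hWdecomp : ∀ i, W i = ∑ j, (X j * sL i) ⊗ₖ (Y j * sR i) := by
    intro i
    rw [hWdef]
    simp only
    rw [hK, Finset.sum_mul]
    exact Finset.sum_congr rfl fun j _ => (Matrix.mul_kronecker_mul _ _ _ _).symm
  have hWW : ∀ i, W i * (W i)ᴴ = K * ((ρL i) ⊗ₖ (ρR i)) * Kᴴ := by
    intro i
    have h1 : (sL i ⊗ₖ sR i)ᴴ = sL i ⊗ₖ sR i := by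
      rw [kron_conjTranspose', (hρL i).posSemidef_sqrt.1, (hρR i).posSemidef_sqrt.1]
    have h2 : (sL i ⊗ₖ sR i) * (sL i ⊗ₖ sR i) = (ρL i) ⊗ₖ (ρR i) := by
      rw [← Matrix.mul_kronecker_mul]
      rw [hsL, hsR]
      simp only
      rw [(hρL i).sqrt_mul_self, (hρR i).sqrt_mul_self]
    rw [hWdef]
    simp only
    rw [conjTranspose_mul, h1, mul_assoc, ← mul_assoc (sL i ⊗ₖ sR i), h2, ← mul_assoc]
  have hQsum : Q = ∑ i, ((p i : ℝ) : ℂ) • (W i * (W i)ᴴ) := by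
    rw [hQdef, hρ, Finset.mul_sum, Finset.sum_mul]
    refine Finset.sum_congr rfl fun i _ => ?_
    rw [hWW i, real_smul_eq, mul_smul_comm, smul_mul_assoc]
  choose a b hab hborth using
    fun i : Fin D => orthogonalize' (fun j => X j * sL i) (fun j => Y j * sR i)
  have hW : ∀ i, W i = ∑ k, a i k ⊗ₖ b i k := fun i => (hWdecomp i).trans (hab i)
  set αf : Fin D × Fin M → ℝ := fun q => nuu (a q.1 q.2) with hαf
  set βf : Fin D × Fin M → ℝ := fun q => nuu (b q.1 q.2) with hβf
  set ef : Fin D × Fin M → ℝ := fun q =>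
    Real.sqrt (p q.1) * (Real.sqrt (αf q) * Real.sqrt (βf q)) with hef
  set Sm : Fin D × Fin M → Matrix l l ℂ := fun q =>
    ((Real.sqrt (p q.1) * Real.sqrt (βf q) / Real.sqrt (αf q) : ℝ) : ℂ) •
      (a q.1 q.2 * (a q.1 q.2)ᴴ) with hSm
  set Tm : Fin D × Fin M → Matrix r r ℂ := fun q =>
    ((Real.sqrt (p q.1) * Real.sqrt (αf q) / Real.sqrt (βf q) : ℝ) : ℂ) •
      (b q.1 q.2 * (b q.1 q.2)ᴴ) with hTm
  set Gl : Matrix l l ℂ := ∑ q, Sm q with hGL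
  set Gr : Matrix r r ℂ := ∑ q, Tm q with hGR
  set csum : ℝ := ∑ q, ef q with hcsum
  set Treal : ℝ := ∑ q : Fin D × Fin M, p q.1 * (αf q * βf q) with hTreal
  have hαnn : ∀ q, 0 ≤ αf q := fun q => nuu_nonneg _
  have hβnn : ∀ q, 0 ≤ βf q := fun q => nuu_nonneg _
  have hGLpsd : Gl.PosSemidef := psd_sum' _ _ fun q _ =>
    psd_smul' (posSemidef_self_mul_conjTranspose _) (by positivity)
  have hGRpsd : Gr.PosSemidef := psd_sum' _ _ fun q _ =>
    psd_smul' (posSemidef_self_mul_conjTranspose _) (by positivity)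
  -- traces of Gl and Gr
  have htrGL : Gl.trace = ((csum : ℝ) : ℂ) := by
    rw [hGL, Matrix.trace_sum, hcsum]
    push_cast
    refine Finset.sum_congr rfl fun q _ => ?_
    rw [hSm]
    simp only
    rw [Matrix.trace_smul, trace_mul_ct, smul_eq_mul, ← Complex.ofReal_mul]
    have : nuu (a q.1 q.2) = αf q := rfl
    rw [this, bal1 (hαnn q)]
  have htrGR : Gr.trace = ((csum : ℝ) : ℂ) := by
    rw [hGR, Matrix.trace_sum, hcsum]
    push_cast
    refine Finset.sum_congr rfl fun q _ => ?_
    rw [hTm]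
    simp only
    rw [Matrix.trace_smul, trace_mul_ct, smul_eq_mul, ← Complex.ofReal_mul]
    have : nuu (b q.1 q.2) = βf q := rfl
    rw [this, bal1 (hβnn q)]
    rw [hef]
    push_cast
    ring
  have hefnn : ∀ q, 0 ≤ ef q := by
    intro q; rw [hef]; positivity
  set Zf : Fin D × Fin M → Matrix (l × r) (l × r) ℂ := fun q =>
    (a q.1 q.2 * (a q.1 q.2)ᴴ) ⊗ₖ (b q.1 q.2 * (b q.1 q.2)ᴴ) with hZf
  have htrW : ∀ i, (W i * (W i)ᴴ).trace = ((∑ k, αf (i,k) * βf (i,k) : ℝ) : ℂ) := by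
    intro i
    rw [hW i, conjTranspose_sum, Finset.sum_mul, Matrix.trace_sum]
    push_cast
    refine Finset.sum_congr rfl fun k _ => ?_
    rw [Finset.mul_sum, Matrix.trace_sum, Finset.sum_eq_single k]
    · rw [kron_conjTranspose', ← Matrix.mul_kronecker_mul, Matrix.trace_kronecker,
        trace_mul_ct, trace_mul_ct]
    · intro k' _ hk'
      rw [kron_conjTranspose', ← Matrix.mul_kronecker_mul, Matrix.trace_kronecker]
      have hz : (b i k * (b i k')ᴴ).trace = 0 := by
        rw [Matrix.trace_mul_comm]
        exact hborth i k' k hk'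
      rw [hz, mul_zero]
    · intro hk; exact absurd (Finset.mem_univ k) hk
  have htrQ : Q.trace = ((Treal : ℝ) : ℂ) := by
    rw [hQsum, Matrix.trace_sum]
    have e : ∀ i, (((p i : ℝ) : ℂ) • (W i * (W i)ᴴ)).trace
        = ((p i * ∑ k, αf (i,k) * βf (i,k) : ℝ) : ℂ) := by
      intro i
      rw [Matrix.trace_smul, htrW i, smul_eq_mul]
      push_cast
      ring
    rw [Finset.sum_congr rfl fun i _ => e i, hTreal]
    push_cast
    rw [Fintype.sum_prod_type]
    refine Finset.sum_congr rfl fun i _ => ?_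
    rw [Finset.mul_sum]
  have hTpos : 0 < Treal := by
    rw [htrQ] at htr
    simpa using htr
  have hCS : ∀ i, (((M : ℕ) : ℂ) • (∑ k, Zf (i,k)) - W i * (W i)ᴴ).PosSemidef := by
    intro i
    have h := cs_bound' (fun k => a i k ⊗ₖ b i k)
    simp only [kron_conjTranspose', ← Matrix.mul_kronecker_mul] at h
    rw [← hW i] at h
    exact h
  have hpZ : ∀ q, Sm q ⊗ₖ Tm q = ((p q.1 : ℝ) : ℂ) • Zf q := by
    intro q
    rw [hSm, hTm, hZf]
    simp only
    rw [smul_kronecker, kronecker_smul, smul_smul]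
    rcases eq_or_lt_of_le (hαnn q) with hα | hα
    · have ha0 : a q.1 q.2 = 0 := nuu_eq_zero hα.symm
      rw [ha0]
      simp
    rcases eq_or_lt_of_le (hβnn q) with hβ | hβ
    · have hb0 : b q.1 q.2 = 0 := nuu_eq_zero hβ.symm
      rw [hb0]
      simp
    · rw [← Complex.ofReal_mul, bal3 (hp q.1) hα hβ]
  have hA : (((M : ℕ) : ℂ) • (∑ q, ((p q.1 : ℝ) : ℂ) • Zf q) - Q).PosSemidef := by
    have eq1 : ∑ i, ((p i : ℝ) : ℂ) • (((M : ℕ) : ℂ) • (∑ k, Zf (i,k)) - W i * (W i)ᴴ)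
        = ((M : ℕ) : ℂ) • (∑ q, ((p q.1 : ℝ) : ℂ) • Zf q) - Q := by
      rw [hQsum]
      simp only [smul_sub, Finset.sum_sub_distrib]
      congr 1
      rw [Fintype.sum_prod_type]
      simp only [Finset.smul_sum, smul_smul]
      refine Finset.sum_congr rfl fun i _ => Finset.sum_congr rfl fun k _ => ?_
      rw [mul_comm]
    rw [← eq1]
    exact psd_sum' _ _ fun i _ => psd_smul' (hCS i) (hp i)
  have hB : ∑ q, ((p q.1 : ℝ) : ℂ) • Zf q = ∑ q, Sm q ⊗ₖ Tm q :=
    Finset.sum_congr rfl fun q _ => (hpZ q).symm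
  have hC : (Gl ⊗ₖ Gr - ∑ q, Sm q ⊗ₖ Tm q).PosSemidef := by
    rw [hGL, hGR]
    exact prod_bound' Sm Tm
      (fun q => psd_smul' (posSemidef_self_mul_conjTranspose _) (by positivity))
      (fun q => psd_smul' (posSemidef_self_mul_conjTranspose _) (by positivity))
  have hD' : (((M : ℕ) : ℂ) • (Gl ⊗ₖ Gr) - Q).PosSemidef := by
    rw [hB] at hA
    have h1 := psd_smul' hC (c := (M : ℝ)) (Nat.cast_nonneg M)
    have h2 := Matrix.PosSemidef.add h1 hA
    have eq2 : (((M:ℝ) : ℂ)) • (Gl ⊗ₖ Gr - ∑ q, Sm q ⊗ₖ Tm q)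
        + (((M : ℕ) : ℂ) • (∑ q, Sm q ⊗ₖ Tm q) - Q)
        = ((M : ℕ) : ℂ) • (Gl ⊗ₖ Gr) - Q := by
      push_cast
      rw [smul_sub]
      abel
    rwa [eq2] at h2
  have htrace_ineq : Treal ≤ (M : ℝ) * (csum * csum) := by
    have h0 := psd_trace_re_nonneg hD'
    have e : ((((M : ℕ) : ℂ)) • (Gl ⊗ₖ Gr) - Q).trace
        = (((M : ℝ) * (csum * csum) - Treal : ℝ) : ℂ) := by
      rw [Matrix.trace_sub, Matrix.trace_smul, Matrix.trace_kronecker, htrGL, htrGR, htrQ,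
        smul_eq_mul]
      push_cast
      ring
    rw [e] at h0
    simp only [Complex.ofReal_re] at h0
    linarith
  have hcsnn : 0 ≤ csum := Finset.sum_nonneg fun q _ => hefnn q
  have hcspos : 0 < csum := by
    rcases eq_or_lt_of_le hcsnn with h | h
    · exfalso
      rw [← h] at htrace_ineq
      simp only [mul_zero, zero_mul] at htrace_ineq
      linarith
    · exact h
  have hCSsum : csum ^ 2 ≤ ((D : ℝ) * M) * Treal := by
    have h1 : (∑ q : Fin D × Fin M, ef q) ^ 2
        ≤ ((Finset.univ : Finset (Fin D × Fin M)).card : ℝ) * ∑ q, ef q ^ 2 :=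
      sq_sum_le_card_mul_sum_sq
    have h2 : ∀ q : Fin D × Fin M, ef q ^ 2 = p q.1 * (αf q * βf q) := by
      intro q
      rw [hef]
      simp only
      rw [mul_pow, mul_pow, Real.sq_sqrt (hp q.1), Real.sq_sqrt (hαnn q), Real.sq_sqrt (hβnn q)]
    rw [Finset.sum_congr rfl (fun q _ => h2 q)] at h1
    have h3 : ((Finset.univ : Finset (Fin D × Fin M)).card : ℝ) = (D : ℝ) * M := by
      rw [Finset.card_univ, Fintype.card_prod, Fintype.card_fin, Fintype.card_fin]
      push_cast
      ring
    rw [h3] at h1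
    rw [hcsum, hTreal]
    exact h1
  have hTne : Treal ≠ 0 := ne_of_gt hTpos
  have hcne : csum ≠ 0 := ne_of_gt hcspos
  refine ⟨((csum⁻¹ : ℝ) : ℂ) • Gl, ((csum⁻¹ : ℝ) : ℂ) • Gr,
    psd_smul' hGLpsd (by positivity), ?_, psd_smul' hGRpsd (by positivity), ?_, ?_⟩
  · rw [Matrix.trace_smul, htrGL, smul_eq_mul, ← Complex.ofReal_mul, inv_mul_cancel₀ hcne]
    simp
  · rw [Matrix.trace_smul, htrGR, smul_eq_mul, ← Complex.ofReal_mul, inv_mul_cancel₀ hcne]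
    simp
  · have hQre : Q.trace.re = Treal := by
      rw [htrQ]
      simp
    rw [hQre]
    rw [real_smul_eq, real_smul_eq]
    rw [smul_kronecker, kronecker_smul, smul_smul]
    set r1 : ℝ := ((D:ℝ)*M)^2 * (csum⁻¹ * csum⁻¹) - Treal⁻¹ * M with hr1
    have hD1 : (1:ℝ) ≤ (D:ℝ) := by exact_mod_cast hD
    have base : (M:ℝ) * csum^2 ≤ ((D:ℝ)*M)^2 * Treal := by
      have b1 : (M:ℝ) * csum^2 ≤ (M:ℝ) * (((D:ℝ)*M) * Treal) :=
        mul_le_mul_of_nonneg_left hCSsum (Nat.cast_nonneg M)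
      have hMD : (M:ℝ) ≤ (D:ℝ)*M := le_mul_of_one_le_left (Nat.cast_nonneg M) hD1
      have b2 : (M:ℝ) * (((D:ℝ)*M) * Treal) ≤ ((D:ℝ)*M) * (((D:ℝ)*M) * Treal) :=
        mul_le_mul_of_nonneg_right hMD (mul_nonneg (by positivity) hTpos.le)
      have b3 : ((D:ℝ)*M) * (((D:ℝ)*M) * Treal) = ((D:ℝ)*M)^2 * Treal := by ring
      linarith
    have hr1nn : 0 ≤ r1 := by
      rw [hr1, sub_nonneg,
        show Treal⁻¹ * (M:ℝ) = (M:ℝ)/Treal by ring,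
        show ((D:ℝ)*M)^2 * (csum⁻¹ * csum⁻¹) = ((D:ℝ)*M)^2/csum^2 by ring]
      exact (div_le_div_iff₀ hTpos (pow_pos hcspos 2)).mpr base
    have final := Matrix.PosSemidef.add (psd_smul' (kron_psd' hGLpsd hGRpsd) hr1nn)
      (psd_smul' hD' (inv_nonneg.mpr hTpos.le))
    have eqM : (((((D:ℝ) * M) ^ 2 : ℝ) : ℂ) * ((csum⁻¹ : ℝ) : ℂ)) •
          (((csum⁻¹ : ℝ) : ℂ) • (Gl ⊗ₖ Gr)) - ((Treal⁻¹ : ℝ) : ℂ) • Q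
        = ((r1 : ℝ) : ℂ) • (Gl ⊗ₖ Gr)
          + ((Treal⁻¹ : ℝ) : ℂ) • ((((M : ℕ)) : ℂ) • (Gl ⊗ₖ Gr) - Q) := by
      match_scalars <;> (try rw [hr1]) <;> push_cast <;> ring
    rw [eqM]
    exact final
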